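/- In the k-demand hardness reduction from k-Partite Hypergraph Label Cover to k-DTSN: if every labeling weakly satisfies at most ε|E| hyperedges, then every feasible solution to the constructed k-DTSN instance has cost at least (1 − ε)·|E|·k. -/

import Mathlib

namespace TSNk

variable {k : ℕ} {Vp : Fin k → Type} {Lab C : Type}

/-- A label tuple `ℓ` (one label per part) is *agreeing* for hyperedge `e` if all
its labels are mapped to the same color by the projection functions of `e`. -/
def Agreeing (π : ((t : Fin k) → Vp t) → Fin k → Lab → C)
    (e : (t : Fin k) → Vp t) (ℓ : Fin k → Lab) : Prop :=
  ∀ s s', π e s (ℓ s) = π e s' (ℓ s')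

/-- A candidate solution to the constructed k-DTSN instance: for each time `t`, the
source-to-sink path at time `t` is determined by a labeling `(sol t).1` of part `t`
(choosing a strand in each vertex-bundle) and, in each hyperedge-bundle, a chosen
label combination `(sol t).2 e`. -/
def Sol (Vp : Fin k → Type) (Lab : Type) :=
  (t : Fin k) → ((Vp t → Lab) × (((s : Fin k) → Vp s) → Fin k → Lab))

/-- Validity: the chosen combination extends the strand's label, and is either an
agreeing combination (a merged contact edge) or a dummy strand when no agreeing
combination extending the strand's label exists. -/
def Valid (π : ((t : Fin k) → Vp t) → Fin k → Lab → C)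
    (E : Finset ((t : Fin k) → Vp t)) (sol : Sol Vp Lab) : Prop :=
  ∀ t, ∀ e ∈ E,
    (sol t).2 e t = (sol t).1 (e t) ∧
    (Agreeing π e ((sol t).2 e) ∨
      ¬ ∃ ℓ : Fin k → Lab, Agreeing π e ℓ ∧ ℓ t = (sol t).1 (e t))

variable [∀ t, DecidableEq (Vp t)] [DecidableEq Lab] [DecidableEq C]

instance (π : ((t : Fin k) → Vp t) → Fin k → Lab → C)
    (e : (t : Fin k) → Vp t) (ℓ : Fin k → Lab) : Decidable (Agreeing π e ℓ) :=
  inferInstanceAs (Decidable (∀ s s', π e s (ℓ s) = π e s' (ℓ s')))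

/-- Contact edges traversed by the time-`t` path: one per hyperedge, identified by
the chosen agreeing label combination (merged across times) or by a dummy tag. -/
def contacts (π : ((t : Fin k) → Vp t) → Fin k → Lab → C)
    (E : Finset ((t : Fin k) → Vp t)) (sol : Sol Vp Lab) (t : Fin k) :
    Finset (((s : Fin k) → Vp s) × ((Fin k → Lab) ⊕ Fin k)) :=
  E.image (fun e => (e, if Agreeing π e ((sol t).2 e)
    then Sum.inl ((sol t).2 e) else Sum.inr t))

/-- Cost: number of distinct contact edges used over all times (each contact edge
has weight 1; merged contact edges are counted once). -/
def cost (π : ((t : Fin k) → Vp t) → Fin k → Lab → C)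
    (E : Finset ((t : Fin k) → Vp t)) (sol : Sol Vp Lab) : ℕ :=
  (Finset.univ.biUnion (contacts π E sol)).card

/-- if every labeling weakly satisfies at most `ε |E|` hyperedges,
then every feasible solution of the constructed k-DTSN instance has cost at least
`(1 - ε) |E| k`. -/
theorem stmt11 (hk : 0 < k)
    (π : ((t : Fin k) → Vp t) → Fin k → Lab → C)
    (E : Finset ((t : Fin k) → Vp t)) (ε : ℝ)
    (hno : ∀ φ : (t : Fin k) → Vp t → Lab,
      ((E.filter (fun e => ∃ s s' : Fin k, s ≠ s' ∧
        π e s (φ s (e s)) = π e s' (φ s' (e s')))).card : ℝ) ≤ ε * E.card) :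
    ∀ sol : Sol Vp Lab, Valid π E sol →
      (1 - ε) * E.card * k ≤ (cost π E sol : ℝ) := by
  intro sol hval
  classical
  set φ : (t : Fin k) → Vp t → Lab := fun s v => (sol s).1 v with hφ
  set p : ((t : Fin k) → Vp t) → Prop := fun e => ∃ s s' : Fin k, s ≠ s' ∧
      π e s (φ s (e s)) = π e s' (φ s' (e s')) with hp
  set tag : ((t : Fin k) → Vp t) → Fin k → ((Fin k → Lab) ⊕ Fin k) :=
    fun e t => if Agreeing π e ((sol t).2 e) then Sum.inl ((sol t).2 e)
      else Sum.inr t with htag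
  have hunion : Finset.univ.biUnion (contacts π E sol)
      = E.biUnion (fun e => Finset.univ.image (fun t => (e, tag e t))) := by
    ext x
    simp only [Finset.mem_biUnion, Finset.mem_image, contacts, Finset.mem_univ,
      true_and, htag]
    constructor
    · rintro ⟨t, e, he, rfl⟩; exact ⟨e, he, t, rfl⟩
    · rintro ⟨e, he, t, rfl⟩; exact ⟨t, e, he, rfl⟩
  have hdisj : ∀ e ∈ E, ∀ e' ∈ E, e ≠ e' →
      Disjoint (Finset.univ.image (fun t => (e, tag e t)))
        (Finset.univ.image (fun t => (e', tag e' t))) := by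
    intro e _ e' _ hne
    rw [Finset.disjoint_left]
    rintro x hx hx'
    simp only [Finset.mem_image] at hx hx'
    obtain ⟨t, _, rfl⟩ := hx
    obtain ⟨t', _, h⟩ := hx'
    exact hne (congrArg Prod.fst h).symm
  have hcost : cost π E sol
      = ∑ e ∈ E, (Finset.univ.image (fun t => (e, tag e t))).card := by
    rw [cost, hunion, Finset.card_biUnion hdisj]
  -- per-edge lower bounds
  have hbound : ∀ e ∈ E, (if p e then 1 else k)
      ≤ (Finset.univ.image (fun t => (e, tag e t))).card := by
    intro e he
    by_cases hpe : p e
    · simp only [hpe, if_true]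
      have : (Finset.univ.image (fun t => (e, tag e t))).Nonempty := by
        refine ⟨(e, tag e ⟨0, hk⟩), ?_⟩
        exact Finset.mem_image_of_mem _ (Finset.mem_univ _)
      exact Finset.card_pos.mpr this
    · simp only [hpe, if_false]
      have hinj : ∀ t ∈ (Finset.univ : Finset (Fin k)), ∀ t' ∈ Finset.univ,
          (e, tag e t) = (e, tag e t') → t = t' := by
        intro t _ t' _ h
        have h2 : tag e t = tag e t' := congrArg Prod.snd h
        by_contra hne
        simp only [htag] at h2
        by_cases h1 : Agreeing π e ((sol t).2 e)
        · by_cases h1' : Agreeing π e ((sol t').2 e)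
          · simp only [h1, h1', if_true] at h2
            have hℓ : (sol t).2 e = (sol t').2 e := by
              simpa using h2
            apply hpe
            refine ⟨t, t', hne, ?_⟩
            have e1 := (hval t e he).1
            have e2 := (hval t' e he).1
            have := h1 t t'
            rw [e1] at this
            rw [hℓ, e2] at this
            exact this
          · simp only [h1, h1', if_true, if_false] at h2
            exact Sum.inl_ne_inr h2
        · by_cases h1' : Agreeing π e ((sol t').2 e)
          · simp only [h1, h1', if_true, if_false] at h2
            exact Sum.inr_ne_inl h2
          · simp only [h1, h1', if_false] at h2
            exact hne (Sum.inr.inj h2)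
      calc k = (Finset.univ : Finset (Fin k)).card := by simp
        _ = (Finset.univ.image (fun t => (e, tag e t))).card :=
            (Finset.card_image_of_injOn hinj).symm
        _ ≤ _ := le_refl _
  have hsum : ∑ e ∈ E, (if p e then 1 else k) ≤ cost π E sol := by
    rw [hcost]; exact Finset.sum_le_sum hbound
  set F := E.filter p with hFdef
  set G := E.filter (fun e => ¬ p e) with hGdef
  have hsplit : F.card + G.card = E.card :=
    Finset.card_filter_add_card_filter_not p
  have hval2 : ∑ e ∈ E, (if p e then 1 else k) = F.card * 1 + G.card * k := by
    rw [Finset.sum_ite, Finset.sum_const, Finset.sum_const, smul_eq_mul, smul_eq_mul]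
  have hFle : (F.card : ℝ) ≤ ε * E.card := hno φ
  have hFge : (0 : ℝ) ≤ (F.card : ℝ) := Nat.cast_nonneg _
  have hk1 : (1 : ℝ) ≤ (k : ℝ) := by exact_mod_cast hk
  have hsplit' : (F.card : ℝ) + G.card = E.card := by exact_mod_cast hsplit
  have hsum' : (F.card : ℝ) * 1 + (G.card : ℝ) * k ≤ (cost π E sol : ℝ) := by
    have := hval2 ▸ hsum
    exact_mod_cast this
  nlinarith [mul_le_mul_of_nonneg_left hFle (sub_nonneg.mpr hk1),
    mul_nonneg hFge (sub_nonneg.mpr hk1)]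

end TSNk
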